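/- For every τ = x + iy in the upper half-plane, with q := e^{2πiτ}, the non-normalized Appell sum A(2τ+1/2, 1/2; 24τ) := −q ∑_{n∈ℤ} (−1)^n q^{12(n²+n)} / (1 + q^{24n+2}) satisfies |A(2τ+1/2, 1/2; 24τ)| ≤ Θ(iy) / (1 − |q|²), where Θ(iy) := ∑_{n∈ℤ} e^{−2πn²y}. -/

import Mathlib

open Real Complex

/-- The non-normalized Appell sum
`A(2τ+1/2, 1/2; 24τ) = -q ∑_{n∈ℤ} (-1)^n q^{12(n²+n)} / (1 + q^{24n+2})`, `q = e^{2πiτ}`. -/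
noncomputable def appellA (τ : ℂ) : ℂ :=
  -Complex.exp (2 * (π : ℂ) * Complex.I * τ) *
    ∑' n : ℤ, (-1 : ℂ) ^ n *
      Complex.exp (2 * (π : ℂ) * Complex.I * τ * (12 * ((n : ℂ) ^ 2 + (n : ℂ)))) /
      (1 + Complex.exp (2 * (π : ℂ) * Complex.I * τ * (24 * (n : ℂ) + 2)))

/-- `|A(2τ+1/2,1/2;24τ)| ≤ Θ(iy)/(1-|q|²)` where `Θ(iy) = ∑_{n∈ℤ} e^{-2πn²y}`. -/
theorem appellA_bound (x y : ℝ) (hy : 0 < y) :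
    ‖appellA ((x : ℂ) + (y : ℂ) * Complex.I)‖ ≤
      (∑' n : ℤ, Real.exp (-2 * π * (n : ℝ) ^ 2 * y)) /
        (1 - ‖Complex.exp (2 * (π : ℂ) * Complex.I * ((x : ℂ) + (y : ℂ) * Complex.I))‖ ^ 2) := by
  set τ : ℂ := (x : ℂ) + (y : ℂ) * Complex.I with hτ
  have key : ∀ c : ℝ, ‖Complex.exp (2 * (π : ℂ) * Complex.I * τ * (c : ℂ))‖
      = Real.exp (-(2 * π * y * c)) := by
    intro c
    rw [Complex.norm_exp]
    congr 1
    have : (2 * (π : ℂ) * Complex.I * τ * (c : ℂ))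
        = ((2 * π * x * c : ℝ) : ℂ) * Complex.I + ((-(2 * π * y * c) : ℝ) : ℂ) := by
      rw [hτ]; push_cast; ring_nf; simp [Complex.I_sq]; ring
    rw [this]
    simp
  set r : ℝ := Real.exp (-(2 * π * y)) with hrdef
  have hr0 : 0 < r := Real.exp_pos _
  have hr1 : r < 1 := by
    rw [hrdef, Real.exp_lt_one_iff]
    have := Real.pi_pos
    nlinarith
  have hq : ‖Complex.exp (2 * (π : ℂ) * Complex.I * τ)‖ = r := by
    have := key 1
    simpa using this
  have hden : (0:ℝ) < 1 - r ^ 2 := by nlinarith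
  have hΘ : Summable (fun n : ℤ => Real.exp (-2 * π * (n : ℝ) ^ 2 * y)) := by
    have h : Summable (fun n : ℤ => ‖jacobiTheta₂_term n 0 (2 * y * Complex.I)‖) := by
      refine ((summable_jacobiTheta₂_term_iff 0 (2 * y * Complex.I)).mpr ?_).norm
      simp [hy]
    refine h.congr fun n => ?_
    rw [jacobiTheta₂_term, Complex.norm_exp]
    congr 1
    have h1 : (2 * ↑π * Complex.I * ↑n * 0 + ↑π * Complex.I * ↑n ^ 2 * (2 * ↑y * Complex.I))
        = ((-2 * π * (n:ℝ) ^ 2 * y : ℝ) : ℂ) := by push_cast; ring_nf; simp [Complex.I_sq]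
    rw [h1, Complex.ofReal_re]
  have hterm : ∀ n : ℤ,
      ‖(-1 : ℂ) ^ n *
        Complex.exp (2 * (π : ℂ) * Complex.I * τ * (12 * ((n : ℂ) ^ 2 + (n : ℂ)))) /
        (1 + Complex.exp (2 * (π : ℂ) * Complex.I * τ * (24 * (n : ℂ) + 2)))‖
      ≤ Real.exp (-2 * π * (n : ℝ) ^ 2 * y) * (Real.exp (2 * π * y) / (1 - r ^ 2)) := by
    intro n
    have hnum : ‖(-1 : ℂ) ^ n *
        Complex.exp (2 * (π : ℂ) * Complex.I * τ * (12 * ((n : ℂ) ^ 2 + (n : ℂ))))‖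
        = Real.exp (-(2 * π * y * (12 * ((n:ℝ) ^ 2 + n)))) := by
      rw [norm_mul]
      have h1 : (12 * ((n : ℂ) ^ 2 + (n : ℂ))) = ((12 * ((n:ℝ)^2 + n) : ℝ) : ℂ) := by push_cast; ring
      rw [h1, key]
      simp
    have hB : ‖Complex.exp (2 * (π : ℂ) * Complex.I * τ * (24 * (n : ℂ) + 2))‖
        = Real.exp (-(2 * π * y * (24 * (n:ℝ) + 2))) := by
      have h1 : (24 * (n : ℂ) + 2) = ((24 * (n:ℝ) + 2 : ℝ) : ℂ) := by push_cast; ring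
      rw [h1, key]
    set B := Complex.exp (2 * (π : ℂ) * Complex.I * τ * (24 * (n : ℂ) + 2)) with hBdef
    have hπy : 0 < 2 * π * y := by positivity
    rw [norm_div, hnum]
    have hRHS : Real.exp (-2 * π * (n : ℝ) ^ 2 * y) * (Real.exp (2 * π * y) / (1 - r ^ 2))
        = Real.exp (-(2 * π * y * ((n:ℝ)^2 - 1))) / (1 - r ^ 2) := by
      rw [mul_div_assoc', ← Real.exp_add]
      congr 2
      ring
    rw [hRHS]
    rcases le_or_gt 0 n with hn | hn
    · have hnR : (0:ℝ) ≤ (n:ℝ) := by exact_mod_cast hn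
      have hBle : ‖B‖ ≤ r ^ 2 := by
        rw [hB, hrdef, ← Real.exp_nat_mul]
        apply Real.exp_le_exp.mpr
        push_cast
        nlinarith
      have hdenom : 1 - r ^ 2 ≤ ‖1 + B‖ := by
        have h : ‖(1:ℂ)‖ - ‖-B‖ ≤ ‖(1:ℂ) - -B‖ := norm_sub_norm_le 1 (-B)
        simp only [sub_neg_eq_add, norm_one, norm_neg] at h
        linarith
      apply div_le_div₀ (Real.exp_pos _).le _ hden hdenom
      apply Real.exp_le_exp.mpr
      nlinarith
    · have hnR : (n:ℝ) ≤ -1 := by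
        have hn1 : n ≤ -1 := by omega
        have h2 : ((n:ℤ):ℝ) ≤ ((-1:ℤ):ℝ) := Int.cast_le.mpr hn1
        simpa using h2
      have hEsmall : Real.exp (2 * π * y * (24 * (n:ℝ) + 2)) ≤ r ^ 2 := by
        rw [hrdef, ← Real.exp_nat_mul]
        apply Real.exp_le_exp.mpr
        push_cast
        nlinarith
      have hpos2 : 0 < 1 - Real.exp (2 * π * y * (24 * (n:ℝ) + 2)) := by nlinarith
      have hE1 : 0 < Real.exp (-(2 * π * y * (24 * (n:ℝ) + 2))) := Real.exp_pos _
      have hdenom : Real.exp (-(2 * π * y * (24 * (n:ℝ) + 2))) *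
            (1 - Real.exp (2 * π * y * (24 * (n:ℝ) + 2))) ≤ ‖1 + B‖ := by
        have h : ‖B‖ - ‖(-1 : ℂ)‖ ≤ ‖B - -1‖ := norm_sub_norm_le B (-1)
        simp only [sub_neg_eq_add, norm_neg, norm_one] at h
        rw [hB] at h
        rw [mul_one_sub, ← Real.exp_add]
        simp only [add_neg_cancel, neg_add_cancel, Real.exp_zero]
        have h2 : ‖(1:ℂ) + B‖ = ‖B + 1‖ := by rw [add_comm]
        have h3 : rexp (-(2 * π * y * (24 * (n:ℝ) + 2)))
            = rexp (-(2 * π * y * (2 + 24 * (n:ℝ)))) := by ring_nf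
        rw [h2, h3]
        linarith
      calc Real.exp (-(2 * π * y * (12 * ((n:ℝ) ^ 2 + n)))) / ‖1 + B‖
          ≤ Real.exp (-(2 * π * y * (12 * ((n:ℝ) ^ 2 + n)))) /
              (Real.exp (-(2 * π * y * (24 * (n:ℝ) + 2))) *
                (1 - Real.exp (2 * π * y * (24 * (n:ℝ) + 2)))) :=
            div_le_div_of_nonneg_left (Real.exp_pos _).le (mul_pos hE1 hpos2) hdenom
        _ = Real.exp (-(2 * π * y * (12 * ((n:ℝ) ^ 2 + n))) - -(2 * π * y * (24 * (n:ℝ) + 2))) /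
              (1 - Real.exp (2 * π * y * (24 * (n:ℝ) + 2))) := by
            rw [div_mul_eq_div_div, ← Real.exp_sub]
        _ ≤ Real.exp (-(2 * π * y * ((n:ℝ)^2 - 1))) / (1 - r ^ 2) := by
            apply div_le_div₀ (Real.exp_pos _).le _ hden (by linarith)
            apply Real.exp_le_exp.mpr
            nlinarith [sq_nonneg ((n:ℝ) + 1)]
  -- assemble
  have hΘ0 : 0 ≤ ∑' n : ℤ, Real.exp (-2 * π * (n : ℝ) ^ 2 * y) :=
    tsum_nonneg fun n => (Real.exp_pos _).le
  have hsum : HasSum (fun n : ℤ => Real.exp (-2 * π * (n : ℝ) ^ 2 * y) *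
      (Real.exp (2 * π * y) / (1 - r ^ 2)))
      ((∑' n : ℤ, Real.exp (-2 * π * (n : ℝ) ^ 2 * y)) * (Real.exp (2 * π * y) / (1 - r ^ 2))) :=
    hΘ.hasSum.mul_right _
  have hS : ‖∑' n : ℤ, (-1 : ℂ) ^ n *
      Complex.exp (2 * (π : ℂ) * Complex.I * τ * (12 * ((n : ℂ) ^ 2 + (n : ℂ)))) /
      (1 + Complex.exp (2 * (π : ℂ) * Complex.I * τ * (24 * (n : ℂ) + 2)))‖
      ≤ (∑' n : ℤ, Real.exp (-2 * π * (n : ℝ) ^ 2 * y)) * (Real.exp (2 * π * y) / (1 - r ^ 2)) :=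
    tsum_of_norm_bounded hsum hterm
  rw [appellA, norm_mul, norm_neg, hq]
  calc r * ‖∑' n : ℤ, (-1 : ℂ) ^ n *
      Complex.exp (2 * (π : ℂ) * Complex.I * τ * (12 * ((n : ℂ) ^ 2 + (n : ℂ)))) /
      (1 + Complex.exp (2 * (π : ℂ) * Complex.I * τ * (24 * (n : ℂ) + 2)))‖
      ≤ r * ((∑' n : ℤ, Real.exp (-2 * π * (n : ℝ) ^ 2 * y)) *
          (Real.exp (2 * π * y) / (1 - r ^ 2))) := by
        exact mul_le_mul_of_nonneg_left hS hr0.le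
    _ = (∑' n : ℤ, Real.exp (-2 * π * (n : ℝ) ^ 2 * y)) / (1 - r ^ 2) := by
        have hmul : r * Real.exp (2 * π * y) = 1 := by
          rw [hrdef, ← Real.exp_add]; simp
        calc r * ((∑' n : ℤ, Real.exp (-2 * π * (n : ℝ) ^ 2 * y)) *
            (Real.exp (2 * π * y) / (1 - r ^ 2)))
            = (r * Real.exp (2 * π * y)) * (∑' n : ℤ, Real.exp (-2 * π * (n : ℝ) ^ 2 * y)) /
              (1 - r ^ 2) := by ring
          _ = (∑' n : ℤ, Real.exp (-2 * π * (n : ℝ) ^ 2 * y)) / (1 - r ^ 2) := by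
              rw [hmul, one_mul]
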